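/- The F[∂_1,…,∂_5]-module RE(5,10), defined as the submodule of the free F[∂]-module R̂E(5,10) (on even generators ∂_{x_1},…,∂_{x_5} and odd generators d_{jk}, j<k) generated by the elements a_{ij} = ∂_i ∂_{x_j} − ∂_j ∂_{x_i} (i,j ∈ {1,…,5}) and b_k = Σ_h ∂_h d_{hk} (k ∈ {1,…,5}), is presented as an F[∂]-module by generators a_{ij}, b_k subject exactly to the relations: (1) a_{ij} + a_{ji} = 0; (2) ∂_h a_{ij} + ∂_i a_{jh} + ∂_j a_{hi} = 0; (3) Σ_k ∂_k b_k = 0. That is, every F[∂]-linear relation among the elements a_{ij}, b_k in R̂E(5,10) is a consequence of (1), (2), (3). -/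

import Mathlib

/-!
# Statement 16 (Proposition 6.4: presentation of `RE(5,10)`)

`R̂E(5,10)` is the free `𝔽[∂₁,…,∂₅]`-module on the even generators `∂_{x_i}`
(`i ∈ Fin 5`) and the odd generators `d_{jk}` (`j < k`), with the conventions
`d_{jj} = 0`, `d_{jk} = -d_{kj}`.  The submodule `RE(5,10)` generated by
`a_{ij} = ∂_i ∂_{x_j} - ∂_j ∂_{x_i}` and `b_k = Σ_h ∂_h d_{hk}` is presented, as an
`𝔽[∂]`-module with generators `a_{ij}`, `b_k`, by exactly the relations
(1) `a_{ij} + a_{ji} = 0`, (2) `∂_h a_{ij} + ∂_i a_{jh} + ∂_j a_{hi} = 0`,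
(3) `Σ_k ∂_k b_k = 0`; that is, the kernel of the canonical map from the free module on
symbols `a_{ij}`, `b_k` onto `RE(5,10)` is spanned by the relations (1), (2), (3).
-/

open MvPolynomial

variable (𝔽 : Type) [Field 𝔽] [CharZero 𝔽] [IsAlgClosed 𝔽]

/-- The polynomial algebra `𝔽[∂₁,…,∂₅]`. -/
abbrev PD (𝔽 : Type) [Field 𝔽] := MvPolynomial (Fin 5) 𝔽

/-- Generators of the free module `R̂E(5,10)`: the `∂_{x_i}` and the `d_{jk}` with
`j < k`. -/
abbrev HatGen := Sum (Fin 5) {p : Fin 5 × Fin 5 // p.1 < p.2}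

/-- The free `𝔽[∂]`-module `R̂E(5,10)`. -/
abbrev HatRE (𝔽 : Type) [Field 𝔽] := HatGen →₀ PD 𝔽

/-- The element `d_{jk}` of `R̂E(5,10)`, for arbitrary `j, k` (`d_{jj} = 0`,
`d_{jk} = -d_{kj}` for `j > k`). -/
noncomputable def dElem (j k : Fin 5) : HatRE 𝔽 :=
  if h : j < k then Finsupp.single (Sum.inr ⟨(j, k), h⟩) 1
  else if h' : k < j then -Finsupp.single (Sum.inr ⟨(k, j), h'⟩) 1
  else 0

/-- The element `a_{ij} = ∂_i ∂_{x_j} - ∂_j ∂_{x_i}`. -/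
noncomputable def aElem (i j : Fin 5) : HatRE 𝔽 :=
  Finsupp.single (Sum.inl j) (X i) - Finsupp.single (Sum.inl i) (X j)

/-- The element `b_k = Σ_h ∂_h d_{hk}`. -/
noncomputable def bElem (k : Fin 5) : HatRE 𝔽 :=
  ∑ h : Fin 5, (X h : PD 𝔽) • dElem 𝔽 h k

/-- The free `𝔽[∂]`-module on the abstract generators `a_{ij}` (`inl (i,j)`) and `b_k`
(`inr k`). -/
abbrev FreeRE (𝔽 : Type) [Field 𝔽] := (Sum (Fin 5 × Fin 5) (Fin 5)) →₀ PD 𝔽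

/-- The canonical `𝔽[∂]`-linear map from the free module on the symbols `a_{ij}`, `b_k`
to `R̂E(5,10)`, whose image is `RE(5,10)`. -/
noncomputable def presMap : FreeRE 𝔽 →ₗ[PD 𝔽] HatRE 𝔽 :=
  Finsupp.lsum (PD 𝔽) fun g =>
    LinearMap.toSpanSingleton (PD 𝔽) (HatRE 𝔽)
      (Sum.elim (fun p => aElem 𝔽 p.1 p.2) (fun k => bElem 𝔽 k) g)

/-- Relation (1): `a_{ij} + a_{ji} = 0`. -/
noncomputable def rel1 (i j : Fin 5) : FreeRE 𝔽 :=
  Finsupp.single (Sum.inl (i, j)) 1 + Finsupp.single (Sum.inl (j, i)) 1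

/-- Relation (2): `∂_h a_{ij} + ∂_i a_{jh} + ∂_j a_{hi} = 0`. -/
noncomputable def rel2 (h i j : Fin 5) : FreeRE 𝔽 :=
  Finsupp.single (Sum.inl (i, j)) (X h) + Finsupp.single (Sum.inl (j, h)) (X i) +
    Finsupp.single (Sum.inl (h, i)) (X j)

/-- Relation (3): `Σ_k ∂_k b_k = 0`. -/
noncomputable def rel3 : FreeRE 𝔽 := ∑ k : Fin 5, Finsupp.single (Sum.inr k) (X k)


namespace RE510

set_option linter.unusedSectionVars false

variable (𝔽 : Type) [Field 𝔽] [CharZero 𝔽]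

variable (𝔽 : Type) [Field 𝔽] [CharZero 𝔽]

/-- total degree of an exponent vector -/
def dg (d : Fin 5 →₀ ℕ) : ℕ := ∑ i, d i

/-- the Euler-type operator `p ↦ ∑ h, X h * ∂ₕ p` -/
noncomputable def eul (p : PD 𝔽) : PD 𝔽 := ∑ h, X h * pderiv h p

lemma eul_add (p q : PD 𝔽) : eul 𝔽 (p + q) = eul 𝔽 p + eul 𝔽 q := by
  simp [eul, mul_add, Finset.sum_add_distrib]

lemma X_mul_pderiv_monomial (d : Fin 5 →₀ ℕ) (a : 𝔽) (h : Fin 5) :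
    X h * pderiv h (monomial d a) = monomial d (a * (d h : 𝔽)) := by
  rw [pderiv_monomial]
  by_cases hd : d h = 0
  · simp [hd]
  · have hX : (X h : PD 𝔽) = monomial (Finsupp.single h 1) 1 := rfl
    have hle : Finsupp.single h 1 ≤ d := by
      rw [Finsupp.single_le_iff]; omega
    rw [hX, monomial_mul, one_mul, add_tsub_cancel_of_le hle]

lemma eul_monomial (d : Fin 5 →₀ ℕ) (a : 𝔽) :
    eul 𝔽 (monomial d a) = monomial d (a * (dg d : 𝔽)) := by
  rw [eul]
  have : ∀ h ∈ Finset.univ, X h * pderiv h (monomial d a) = monomial d (a * (d h : 𝔽)) :=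
    fun h _ => X_mul_pderiv_monomial 𝔽 d a h
  rw [Finset.sum_congr rfl this, ← map_sum, ← Finset.mul_sum]
  congr 1
  rw [dg]
  push_cast
  ring

/-- The diagonal operator scaling a monomial of degree `a` by `1/(a+r)`. -/
noncomputable def diag (r : ℕ) : PD 𝔽 →ₗ[𝔽] PD 𝔽 :=
  (basisMonomials (Fin 5) 𝔽).constr 𝔽 fun d => (((dg d + r : ℕ) : 𝔽))⁻¹ • monomial d 1

lemma diag_monomial (r : ℕ) (d : Fin 5 →₀ ℕ) (a : 𝔽) :
    diag 𝔽 r (monomial d a) = monomial d ((((dg d + r : ℕ) : 𝔽))⁻¹ * a) := by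
  have hb : monomial d a = a • ((basisMonomials (Fin 5) 𝔽) d) := by
    rw [coe_basisMonomials]
    simp [smul_monomial]
  rw [hb, map_smul, diag, Module.Basis.constr_basis, smul_smul, smul_monomial]
  congr 1
  rw [smul_eq_mul, mul_one, mul_comm]

lemma dg_add_single (d : Fin 5 →₀ ℕ) (i : Fin 5) :
    dg (d + Finsupp.single i 1) = dg d + 1 := by
  rw [dg, dg]
  simp only [Finsupp.add_apply, Finset.sum_add_distrib]
  have : (∑ j, (Finsupp.single i 1 : Fin 5 →₀ ℕ) j) = 1 := by
    simp [Finsupp.single_apply]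
  rw [this]

lemma diag_mul_X (r : ℕ) (p : PD 𝔽) (i : Fin 5) :
    diag 𝔽 r (p * X i) = diag 𝔽 (r + 1) p * X i := by
  induction p using MvPolynomial.induction_on' with
  | monomial d a =>
    have hmul : ∀ c : 𝔽, monomial d c * X i = monomial (d + Finsupp.single i 1) c := by
      intro c
      rw [mul_comm, ← pow_one (X i : PD 𝔽), ← monomial_single_add, add_comm]
    have hnat : dg d + 1 + r = dg d + (r + 1) := by omega
    rw [hmul, diag_monomial, diag_monomial, hmul, dg_add_single, hnat]
  | add p q hp hq => rw [add_mul, map_add, hp, hq, map_add, add_mul]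

lemma diag_inv (r : ℕ) (hr : 0 < r) (p : PD 𝔽) :
    eul 𝔽 (diag 𝔽 r p) + (r : PD 𝔽) * diag 𝔽 r p = p := by
  induction p using MvPolynomial.induction_on' with
  | monomial d a =>
    have hC : ((r : ℕ) : PD 𝔽) = C ((r : ℕ) : 𝔽) := (map_natCast (C : 𝔽 →+* PD 𝔽) r).symm
    rw [diag_monomial, eul_monomial, hC, C_mul_monomial, ← map_add]
    congr 1
    have hne : (((dg d + r : ℕ)) : 𝔽) ≠ 0 := Nat.cast_ne_zero.mpr (by omega)
    push_cast at hne ⊢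
    field_simp
  | add p q hp hq =>
    rw [map_add, eul_add, mul_add]
    conv_rhs => rw [← hp, ← hq]
    ring

lemma diag_inv' (r : ℕ) (hr : 0 < r) (p : PD 𝔽) :
    diag 𝔽 r (eul 𝔽 p + (r : PD 𝔽) * p) = p := by
  induction p using MvPolynomial.induction_on' with
  | monomial d a =>
    have hC : ((r : ℕ) : PD 𝔽) = C ((r : ℕ) : 𝔽) := (map_natCast (C : 𝔽 →+* PD 𝔽) r).symm
    rw [eul_monomial, hC, C_mul_monomial, ← map_add, diag_monomial]
    congr 1
    have hne : (((dg d + r : ℕ)) : 𝔽) ≠ 0 := Nat.cast_ne_zero.mpr (by omega)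
    push_cast at hne ⊢
    field_simp
  | add p q hp hq =>
    have hsplit : eul 𝔽 (p + q) + (r : PD 𝔽) * (p + q)
        = (eul 𝔽 p + (r : PD 𝔽) * p) + (eul 𝔽 q + (r : PD 𝔽) * q) := by
      rw [eul_add]; ring
    rw [hsplit, map_add, hp, hq]


section ModuleSide

lemma sum_skew {M : Type} [AddCommGroup M] [Module (PD 𝔽) M] [Module ℚ M]
    (β : Fin 5 → Fin 5 → PD 𝔽) (v : Fin 5 → Fin 5 → M)
    (hβ : ∀ i j, β j i = β i j) (hv : ∀ i j, v j i = -v i j) :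
    ∑ i, ∑ j, β i j • v i j = 0 := by
  have key : (∑ i, ∑ j, β i j • v i j) = -∑ i, ∑ j, β i j • v i j := by
    conv_lhs => rw [Finset.sum_comm]
    rw [← Finset.sum_neg_distrib]
    refine Finset.sum_congr rfl fun x _ => ?_
    rw [← Finset.sum_neg_distrib]
    refine Finset.sum_congr rfl fun y _ => ?_
    rw [hβ x y, hv x y, smul_neg]
  have h2 : (2 : ℚ) • (∑ i, ∑ j, β i j • v i j) = 0 := by
    rw [two_smul]
    nth_rewrite 2 [key]
    exact add_neg_cancel _
  calc (∑ i, ∑ j, β i j • v i j) = (2:ℚ)⁻¹ • ((2:ℚ) • ∑ i, ∑ j, β i j • v i j) := by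
        rw [smul_smul]; norm_num
    _ = 0 := by rw [h2, smul_zero]

noncomputable def eA (i j : Fin 5) : FreeRE 𝔽 := Finsupp.single (Sum.inl (i, j)) (1 : PD 𝔽)

noncomputable def wE (i j : Fin 5) : FreeRE 𝔽 := eA 𝔽 i j - eA 𝔽 j i

lemma wE_swap (i j : Fin 5) : wE 𝔽 j i = -wE 𝔽 i j := by rw [wE, wE]; abel

noncomputable def kap (h i j : Fin 5) : FreeRE 𝔽 :=
  (X h : PD 𝔽) • wE 𝔽 i j + (X i : PD 𝔽) • wE 𝔽 j h + (X j : PD 𝔽) • wE 𝔽 h i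

lemma kap_eq (h i j : Fin 5) : kap 𝔽 h i j = rel2 𝔽 h i j - rel2 𝔽 h j i := by
  simp only [kap, wE, eA, rel2, smul_sub, Finsupp.smul_single, smul_eq_mul, mul_one]
  abel

lemma dElem_swap (i j : Fin 5) : dElem 𝔽 j i = -dElem 𝔽 i j := by
  rcases lt_trichotomy i j with h | h | h
  · simp [dElem, h, asymm h]
  · subst h; simp [dElem]
  · simp [dElem, h, asymm h]

lemma presMap_single (x) (r : PD 𝔽) :
    presMap 𝔽 (Finsupp.single x r)
      = r • (Sum.elim (fun p => aElem 𝔽 p.1 p.2) (fun k => bElem 𝔽 k) x) := by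
  rw [presMap, Finsupp.lsum_single, LinearMap.toSpanSingleton_apply]

lemma presMap_rel1 (i j : Fin 5) : presMap 𝔽 (rel1 𝔽 i j) = 0 := by
  rw [rel1, map_add, presMap_single, presMap_single]
  simp only [Sum.elim_inl, one_smul]
  rw [aElem, aElem]; abel

lemma presMap_rel2 (h i j : Fin 5) : presMap 𝔽 (rel2 𝔽 h i j) = 0 := by
  rw [rel2, map_add, map_add, presMap_single, presMap_single, presMap_single]
  simp only [Sum.elim_inl]
  rw [aElem, aElem, aElem, smul_sub, smul_sub, smul_sub]
  simp only [Finsupp.smul_single, smul_eq_mul]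
  rw [mul_comm (X i : PD 𝔽) (X h), mul_comm (X j : PD 𝔽) (X h), mul_comm (X j : PD 𝔽) (X i)]
  abel

lemma presMap_rel3 : presMap 𝔽 (rel3 𝔽) = 0 := by
  rw [rel3, map_sum]
  have hstep : ∀ k ∈ Finset.univ, presMap 𝔽 (Finsupp.single (Sum.inr k) (X k))
      = ∑ h, ((X k * X h : PD 𝔽)) • dElem 𝔽 h k := by
    intro k _
    rw [presMap_single]
    simp only [Sum.elim_inr]
    rw [bElem, Finset.smul_sum]
    exact Finset.sum_congr rfl fun h _ => smul_smul _ _ _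
  rw [Finset.sum_congr rfl hstep]
  exact sum_skew 𝔽 (fun k h => X k * X h) (fun k h => dElem 𝔽 h k)
    (fun i j => mul_comm _ _) (fun i j => dElem_swap 𝔽 j i)

end ModuleSide

section MainIdentity

lemma syzd (t : Fin 5 → Fin 5 → PD 𝔽) (ha : ∀ i j, t j i = -t i j)
    (hs : ∀ m, ∑ i, t i m * X i = 0) (p q : Fin 5) :
    ∑ i, (X i : PD 𝔽) * pderiv q (t i p) = t p q := by
  have h0 := congrArg (pderiv q) (hs p)
  rw [map_sum, map_zero] at h0
  have hterm : ∀ i ∈ Finset.univ, pderiv q (t i p * X i)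
      = X i * pderiv q (t i p) + t i p * (if i = q then 1 else 0) := by
    intro i _
    rw [pderiv_mul]
    congr 1
    · rw [mul_comm]
    · congr 1
      rw [pderiv_X, Pi.single_apply]
  rw [Finset.sum_congr rfl hterm, Finset.sum_add_distrib] at h0
  have hsum : (∑ i, t i p * (if i = q then 1 else 0)) = t q p := by simp
  rw [hsum] at h0
  linear_combination h0 - ha q p

lemma main_id (t : Fin 5 → Fin 5 → PD 𝔽) (ha : ∀ i j, t j i = -t i j)
    (hs : ∀ m, ∑ i, t i m * X i = 0) :
    ∑ h : Fin 5, ∑ i : Fin 5, ∑ j : Fin 5, (pderiv h (t i j)) • kap 𝔽 h i j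
      = ∑ i : Fin 5, ∑ j : Fin 5, (eul 𝔽 (t i j) + (2 : PD 𝔽) * t i j) • wE 𝔽 i j := by
  have expand : ∀ h i j : Fin 5, (pderiv h (t i j)) • kap 𝔽 h i j
      = ((X h : PD 𝔽) * pderiv h (t i j)) • wE 𝔽 i j
        + ((X i : PD 𝔽) * pderiv h (t i j)) • wE 𝔽 j h
        + ((X j : PD 𝔽) * pderiv h (t i j)) • wE 𝔽 h i := by
    intro h i j
    rw [kap, smul_add, smul_add, smul_smul, smul_smul, smul_smul,
      mul_comm (pderiv h (t i j)) (X h : PD 𝔽), mul_comm (pderiv h (t i j)) (X i : PD 𝔽),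
      mul_comm (pderiv h (t i j)) (X j : PD 𝔽)]
  have hA : (∑ h : Fin 5, ∑ i : Fin 5, ∑ j : Fin 5,
        ((X h : PD 𝔽) * pderiv h (t i j)) • wE 𝔽 i j)
      = ∑ i : Fin 5, ∑ j : Fin 5, (eul 𝔽 (t i j)) • wE 𝔽 i j := by
    conv_lhs => rw [Finset.sum_comm]
    refine Finset.sum_congr rfl fun i _ => ?_
    conv_lhs => rw [Finset.sum_comm]
    refine Finset.sum_congr rfl fun j _ => ?_
    rw [← Finset.sum_smul, eul]
  have hB : (∑ h : Fin 5, ∑ i : Fin 5, ∑ j : Fin 5,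
        ((X i : PD 𝔽) * pderiv h (t i j)) • wE 𝔽 j h)
      = ∑ i : Fin 5, ∑ j : Fin 5, (t i j) • wE 𝔽 i j := by
    calc (∑ h : Fin 5, ∑ i : Fin 5, ∑ j : Fin 5, ((X i : PD 𝔽) * pderiv h (t i j)) • wE 𝔽 j h)
        = ∑ i : Fin 5, ∑ h : Fin 5, ∑ j : Fin 5, ((X i : PD 𝔽) * pderiv h (t i j)) • wE 𝔽 j h :=
          Finset.sum_comm
      _ = ∑ i : Fin 5, ∑ j : Fin 5, ∑ h : Fin 5, ((X i : PD 𝔽) * pderiv h (t i j)) • wE 𝔽 j h :=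
          Finset.sum_congr rfl fun i _ => Finset.sum_comm
      _ = ∑ j : Fin 5, ∑ i : Fin 5, ∑ h : Fin 5, ((X i : PD 𝔽) * pderiv h (t i j)) • wE 𝔽 j h :=
          Finset.sum_comm
      _ = ∑ j : Fin 5, ∑ h : Fin 5, ∑ i : Fin 5, ((X i : PD 𝔽) * pderiv h (t i j)) • wE 𝔽 j h :=
          Finset.sum_congr rfl fun j _ => Finset.sum_comm
      _ = ∑ j : Fin 5, ∑ h : Fin 5, (t j h) • wE 𝔽 j h :=
          Finset.sum_congr rfl fun j _ => Finset.sum_congr rfl fun h _ => by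
            rw [← Finset.sum_smul, syzd 𝔽 t ha hs j h]
  have hC : (∑ h : Fin 5, ∑ i : Fin 5, ∑ j : Fin 5,
        ((X j : PD 𝔽) * pderiv h (t i j)) • wE 𝔽 h i)
      = ∑ i : Fin 5, ∑ j : Fin 5, (t i j) • wE 𝔽 i j := by
    refine Finset.sum_congr rfl fun h _ => Finset.sum_congr rfl fun i _ => ?_
    have hin : ∀ j ∈ Finset.univ, ((X j : PD 𝔽) * pderiv h (t i j)) • wE 𝔽 h i
        = (-((X j : PD 𝔽) * pderiv h (t j i))) • wE 𝔽 h i := by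
      intro j _
      rw [ha j i, map_neg, mul_neg]
    rw [Finset.sum_congr rfl hin, ← Finset.sum_smul, Finset.sum_neg_distrib,
      syzd 𝔽 t ha hs i h, ← ha i h]
  have hRHS : ∀ i j : Fin 5, ((eul 𝔽 (t i j) + (2 : PD 𝔽) * t i j) • wE 𝔽 i j
      = (eul 𝔽 (t i j)) • wE 𝔽 i j + ((t i j) • wE 𝔽 i j + (t i j) • wE 𝔽 i j)) := by
    intro i j
    rw [two_mul, add_smul, add_smul]
  simp only [expand, Finset.sum_add_distrib]
  rw [hA, hB, hC]
  simp only [hRHS, Finset.sum_add_distrib]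
  abel

end MainIdentity

section KeyLemmas

/-- The set of relations. -/
def relSet : Set (FreeRE 𝔽) :=
  (Set.range fun p : Fin 5 × Fin 5 => rel1 𝔽 p.1 p.2) ∪
    (Set.range fun t : Fin 5 × Fin 5 × Fin 5 => rel2 𝔽 t.1 t.2.1 t.2.2) ∪ {rel3 𝔽}

lemma rel1_mem (i j : Fin 5) : rel1 𝔽 i j ∈ relSet 𝔽 := Or.inl (Or.inl ⟨(i, j), rfl⟩)

lemma rel2_mem (h i j : Fin 5) : rel2 𝔽 h i j ∈ relSet 𝔽 := Or.inl (Or.inr ⟨(h, i, j), rfl⟩)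

lemma rel3_mem : rel3 𝔽 ∈ relSet 𝔽 := Or.inr rfl

lemma kap_mem_span (h i j : Fin 5) : kap 𝔽 h i j ∈ Submodule.span (PD 𝔽) (relSet 𝔽) := by
  rw [kap_eq]
  exact sub_mem (Submodule.subset_span (rel2_mem 𝔽 h i j))
    (Submodule.subset_span (rel2_mem 𝔽 h j i))

lemma lemW (s : Fin 5 → Fin 5 → PD 𝔽) (ha : ∀ i j, s j i = -s i j)
    (hs : ∀ m, ∑ i, s i m * X i = 0) :
    (∑ i : Fin 5, ∑ j : Fin 5, s i j • wE 𝔽 i j) ∈ Submodule.span (PD 𝔽) (relSet 𝔽) := by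
  set t : Fin 5 → Fin 5 → PD 𝔽 := fun i j => diag 𝔽 2 (s i j) with ht
  have ta : ∀ i j, t i j = diag 𝔽 2 (s i j) := fun _ _ => rfl
  have hta : ∀ i j, t j i = -t i j := by
    intro i j
    rw [ta, ta, ha, map_neg]
  have hts : ∀ m, ∑ i, t i m * X i = 0 := by
    intro m
    have hstep : ∀ i ∈ Finset.univ, t i m * X i = diag 𝔽 1 (s i m * X i) := by
      intro i _
      rw [ta]
      exact (diag_mul_X 𝔽 1 (s i m) i).symm
    rw [Finset.sum_congr rfl hstep, ← map_sum, hs, map_zero]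
  have hrec : ∀ i j, s i j = eul 𝔽 (t i j) + (2 : PD 𝔽) * t i j := by
    intro i j
    have h2 : ((2 : ℕ) : PD 𝔽) = (2 : PD 𝔽) := by norm_cast
    rw [ta, ← h2]
    exact (diag_inv 𝔽 2 (by norm_num) (s i j)).symm
  have heq : (∑ i : Fin 5, ∑ j : Fin 5, s i j • wE 𝔽 i j)
      = ∑ h : Fin 5, ∑ i : Fin 5, ∑ j : Fin 5, (pderiv h (t i j)) • kap 𝔽 h i j := by
    refine Eq.trans ?_ (main_id 𝔽 t hta hts).symm
    exact Finset.sum_congr rfl fun i _ => Finset.sum_congr rfl fun j _ => by rw [← hrec]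
  rw [heq]
  exact Submodule.sum_mem _ fun h _ => Submodule.sum_mem _ fun i _ => Submodule.sum_mem _ fun j _ =>
    Submodule.smul_mem _ _ (kap_mem_span 𝔽 h i j)

lemma lemG (g : Fin 5 → PD 𝔽) (hg : ∀ j k, g k * X j = g j * X k) :
    ∃ q : PD 𝔽, ∀ k, g k = q * X k := by
  refine ⟨diag 𝔽 5 (∑ h, pderiv h (g h)), fun k => ?_⟩
  have key : eul 𝔽 (g k) + ((4 : ℕ) : PD 𝔽) * g k = (∑ h, pderiv h (g h)) * X k := by
    have h1 : ∀ h ∈ Finset.univ, pderiv h (g k * X h) = pderiv h (g h * X k) :=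
      fun h _ => by rw [hg h k]
    have h2 := Finset.sum_congr rfl h1
    have hL : (∑ h, pderiv h (g k * X h)) = eul 𝔽 (g k) + ((5 : ℕ) : PD 𝔽) * g k := by
      have hstep : ∀ h ∈ Finset.univ, pderiv h (g k * X h)
          = X h * pderiv h (g k) + g k := by
        intro h _
        rw [pderiv_mul, pderiv_X_self, mul_one, mul_comm (pderiv h (g k)) (X h : PD 𝔽)]
      rw [Finset.sum_congr rfl hstep, Finset.sum_add_distrib, eul]
      congr 1
      rw [Finset.sum_const, Finset.card_univ, Fintype.card_fin, nsmul_eq_mul]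
    have hR : (∑ h, pderiv h (g h * X k)) = (∑ h, pderiv h (g h)) * X k + g k := by
      have hstep : ∀ h ∈ Finset.univ, pderiv h (g h * X k)
          = pderiv h (g h) * X k + g h * (if k = h then 1 else 0) := by
        intro h _
        rw [pderiv_mul]
        congr 2
        rw [pderiv_X, Pi.single_apply]
      rw [Finset.sum_congr rfl hstep, Finset.sum_add_distrib, Finset.sum_mul]
      congr 1
      simp
    rw [hL, hR] at h2
    push_cast at h2 ⊢
    linear_combination h2
  have h3 := diag_inv' 𝔽 4 (by norm_num) (g k)
  rw [key, diag_mul_X] at h3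
  rw [← h3]

end KeyLemmas

section Evaluation

lemma presMap_eq (f : FreeRE 𝔽) :
    presMap 𝔽 f = ∑ x : (Fin 5 × Fin 5) ⊕ Fin 5,
      f x • (Sum.elim (fun p => aElem 𝔽 p.1 p.2) (fun k => bElem 𝔽 k) x) := by
  rw [presMap, Finsupp.lsum_apply, Finsupp.sum_fintype]
  · exact Finset.sum_congr rfl fun x _ => LinearMap.toSpanSingleton_apply _ _ _ _
  · intro x
    exact map_zero _

lemma aElem_apply_inl (i j m : Fin 5) :
    aElem 𝔽 i j (Sum.inl m)
      = (if j = m then (X i : PD 𝔽) else 0) - (if i = m then (X j : PD 𝔽) else 0) := by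
  simp [aElem, Finsupp.single_apply]

lemma aElem_apply_inr (i j : Fin 5) (p : {p : Fin 5 × Fin 5 // p.1 < p.2}) :
    aElem 𝔽 i j (Sum.inr p) = 0 := by
  simp [aElem, Finsupp.single_apply]

lemma dElem_apply_inl (j k m : Fin 5) : dElem 𝔽 j k (Sum.inl m) = 0 := by
  rw [dElem]
  split_ifs <;> simp [Finsupp.single_apply]

lemma bElem_apply_inl (k m : Fin 5) : bElem 𝔽 k (Sum.inl m) = 0 := by
  rw [bElem, Finsupp.finset_sum_apply]
  refine Finset.sum_eq_zero fun h _ => ?_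
  rw [Finsupp.smul_apply, dElem_apply_inl, smul_zero]

lemma dElem_apply_inr (h k p q : Fin 5) (hpq : p < q) :
    dElem 𝔽 h k (Sum.inr ⟨(p, q), hpq⟩)
      = (if h = p ∧ k = q then (1 : PD 𝔽) else 0)
        - (if h = q ∧ k = p then (1 : PD 𝔽) else 0) := by
  rcases lt_trichotomy h k with hlt | heq | hgt
  · rw [dElem, dif_pos hlt, Finsupp.single_apply]
    have hfalse : ¬(h = q ∧ k = p) := by
      rintro ⟨rfl, rfl⟩
      exact absurd hlt (asymm hpq)
    rw [if_neg hfalse, sub_zero]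
    have hcond : ((Sum.inr ⟨(h, k), hlt⟩ : HatGen) = Sum.inr ⟨(p, q), hpq⟩) ↔ (h = p ∧ k = q) := by
      simp
    rw [if_congr hcond rfl rfl]
  · have hf1 : ¬(h = p ∧ k = q) := by
      rintro ⟨rfl, rfl⟩
      exact absurd heq hpq.ne
    have hf2 : ¬(h = q ∧ k = p) := by
      rintro ⟨rfl, rfl⟩
      exact absurd heq.symm hpq.ne
    rw [dElem, dif_neg (by rw [heq]; exact lt_irrefl k), dif_neg (by rw [heq]; exact lt_irrefl k),
      if_neg hf1, if_neg hf2, sub_zero, Finsupp.zero_apply]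
  · rw [dElem, dif_neg (asymm hgt), dif_pos hgt, Finsupp.neg_apply, Finsupp.single_apply]
    have hfalse : ¬(h = p ∧ k = q) := by
      rintro ⟨rfl, rfl⟩
      exact absurd hgt (asymm hpq)
    rw [if_neg hfalse, zero_sub]
    have hcond : ((Sum.inr ⟨(k, h), hgt⟩ : HatGen) = Sum.inr ⟨(p, q), hpq⟩) ↔ (h = q ∧ k = p) := by
      constructor
      · intro hh
        simp at hh
        exact ⟨hh.2.symm ▸ rfl, hh.1.symm ▸ rfl⟩
      · rintro ⟨rfl, rfl⟩
        rfl
    rw [if_congr hcond rfl rfl]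

lemma sum_ite_and_left (c : Prop) [Decidable c] (p : Fin 5) (f : Fin 5 → PD 𝔽) :
    (∑ h, if h = p ∧ c then f h else 0) = if c then f p else 0 := by
  by_cases hc : c
  · simp [hc]
  · simp [hc]

lemma bElem_apply_inr (k p q : Fin 5) (hpq : p < q) :
    bElem 𝔽 k (Sum.inr ⟨(p, q), hpq⟩)
      = (if k = q then (X p : PD 𝔽) else 0) - (if k = p then (X q : PD 𝔽) else 0) := by
  rw [bElem, Finsupp.finset_sum_apply]
  have hstep : ∀ h ∈ Finset.univ, ((X h : PD 𝔽) • dElem 𝔽 h k) (Sum.inr ⟨(p, q), hpq⟩)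
      = (if h = p ∧ k = q then (X h : PD 𝔽) else 0)
        - (if h = q ∧ k = p then (X h : PD 𝔽) else 0) := by
    intro h _
    rw [Finsupp.smul_apply, dElem_apply_inr 𝔽 h k p q hpq, smul_sub, smul_eq_mul, smul_eq_mul,
      mul_ite, mul_one, mul_zero, mul_ite, mul_one, mul_zero]
  rw [Finset.sum_congr rfl hstep, Finset.sum_sub_distrib, sum_ite_and_left, sum_ite_and_left]

lemma ker_S1 (f : FreeRE 𝔽) (hf : presMap 𝔽 f = 0) (m : Fin 5) :
    ∑ i, (f (Sum.inl (i, m)) - f (Sum.inl (m, i))) * X i = 0 := by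
  have h0 : (∑ x : (Fin 5 × Fin 5) ⊕ Fin 5,
      f x • (Sum.elim (fun p => aElem 𝔽 p.1 p.2) (fun k => bElem 𝔽 k) x)) (Sum.inl m) = 0 := by
    rw [← presMap_eq, hf]
    rfl
  rw [Finsupp.finset_sum_apply, Fintype.sum_sum_type] at h0
  simp only [Sum.elim_inl, Sum.elim_inr, Finsupp.smul_apply, smul_eq_mul] at h0
  have hb : ∀ b ∈ Finset.univ, f (Sum.inr b) * bElem 𝔽 b (Sum.inl m) = 0 := by
    intro b _
    rw [bElem_apply_inl, mul_zero]
  rw [Finset.sum_congr rfl hb, Finset.sum_const_zero, add_zero, Fintype.sum_prod_type] at h0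
  have hstep : ∀ i ∈ Finset.univ, (∑ j, f (Sum.inl (i, j)) * aElem 𝔽 i j (Sum.inl m))
      = (∑ j, if j = m then f (Sum.inl (i, j)) * X i else 0)
        - (∑ j, if i = m then f (Sum.inl (i, j)) * X j else 0) := by
    intro i _
    rw [← Finset.sum_sub_distrib]
    refine Finset.sum_congr rfl fun j _ => ?_
    rw [aElem_apply_inl, mul_sub, mul_ite, mul_zero, mul_ite, mul_zero]
  rw [Finset.sum_congr rfl hstep, Finset.sum_sub_distrib] at h0
  have hfirst : (∑ i : Fin 5, ∑ j : Fin 5, if j = m then f (Sum.inl (i, j)) * X i else 0)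
      = ∑ i, f (Sum.inl (i, m)) * X i := by
    refine Finset.sum_congr rfl fun i _ => ?_
    simp
  have hsecond : (∑ i : Fin 5, ∑ j : Fin 5, if i = m then f (Sum.inl (i, j)) * X j else 0)
      = ∑ j, f (Sum.inl (m, j)) * X j := by
    rw [Finset.sum_comm]
    refine Finset.sum_congr rfl fun j _ => ?_
    simp
  rw [hfirst, hsecond] at h0
  have hgoal : ∀ i ∈ Finset.univ, (f (Sum.inl (i, m)) - f (Sum.inl (m, i))) * X i
      = f (Sum.inl (i, m)) * X i - f (Sum.inl (m, i)) * X i := by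
    intro i _
    rw [sub_mul]
  rw [Finset.sum_congr rfl hgoal, Finset.sum_sub_distrib]
  exact h0

lemma ker_S2 (f : FreeRE 𝔽) (hf : presMap 𝔽 f = 0) :
    ∀ j k : Fin 5, f (Sum.inr k) * X j = f (Sum.inr j) * X k := by
  have base : ∀ (p q : Fin 5) (hpq : p < q),
      f (Sum.inr q) * X p - f (Sum.inr p) * X q = 0 := by
    intro p q hpq
    have h0 : (∑ x : (Fin 5 × Fin 5) ⊕ Fin 5,
        f x • (Sum.elim (fun p => aElem 𝔽 p.1 p.2) (fun k => bElem 𝔽 k) x))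
          (Sum.inr ⟨(p, q), hpq⟩) = 0 := by
      rw [← presMap_eq, hf]
      rfl
    rw [Finsupp.finset_sum_apply, Fintype.sum_sum_type] at h0
    simp only [Sum.elim_inl, Sum.elim_inr, Finsupp.smul_apply, smul_eq_mul] at h0
    have hazero : ∀ a ∈ Finset.univ,
        f (Sum.inl a) * aElem 𝔽 a.1 a.2 (Sum.inr ⟨(p, q), hpq⟩) = 0 := by
      intro a _
      rw [aElem_apply_inr, mul_zero]
    rw [Finset.sum_congr rfl hazero, Finset.sum_const_zero, zero_add] at h0
    have hstep : ∀ b ∈ Finset.univ, f (Sum.inr b) * bElem 𝔽 b (Sum.inr ⟨(p, q), hpq⟩)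
        = (if b = q then f (Sum.inr b) * X p else 0)
          - (if b = p then f (Sum.inr b) * X q else 0) := by
      intro b _
      rw [bElem_apply_inr 𝔽 b p q hpq, mul_sub, mul_ite, mul_zero, mul_ite, mul_zero]
    rw [Finset.sum_congr rfl hstep, Finset.sum_sub_distrib] at h0
    simp only [Finset.sum_ite_eq', Finset.mem_univ, if_true] at h0
    exact h0
  intro j k
  rcases lt_trichotomy j k with h | h | h
  · have hb := base j k h
    rw [sub_eq_zero] at hb
    exact hb
  · rw [h]
  · have hb := base k j h
    rw [sub_eq_zero] at hb
    exact hb.symm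

lemma f_decomp (f : FreeRE 𝔽) :
    f = (∑ i : Fin 5, ∑ j : Fin 5, Finsupp.single (Sum.inl (i, j)) (f (Sum.inl (i, j))))
        + ∑ k : Fin 5, Finsupp.single (Sum.inr k) (f (Sum.inr k)) := by
  have h1 : f = ∑ x : (Fin 5 × Fin 5) ⊕ Fin 5, Finsupp.single x (f x) := by
    ext y
    rw [Finsupp.finset_sum_apply, Finset.sum_eq_single y]
    · rw [Finsupp.single_eq_same]
    · intro b _ hby
      rw [Finsupp.single_eq_of_ne' hby]
    · intro hy
      exact absurd (Finset.mem_univ y) hy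
  conv_lhs => rw [h1]
  rw [Fintype.sum_sum_type, Fintype.sum_prod_type]

end Evaluation

end RE510

/-- **Proposition 6.4.**  Every `𝔽[∂]`-linear relation among the elements `a_{ij}`, `b_k`
of `R̂E(5,10)` is a consequence of the relations (1), (2), (3): the kernel of the
canonical map from the free module on the symbols `a_{ij}`, `b_k` is exactly the
submodule spanned by them. -/
theorem re510_presentation :
    LinearMap.ker (presMap 𝔽) =
      Submodule.span (PD 𝔽)
        ((Set.range fun p : Fin 5 × Fin 5 => rel1 𝔽 p.1 p.2) ∪
          (Set.range fun t : Fin 5 × Fin 5 × Fin 5 => rel2 𝔽 t.1 t.2.1 t.2.2) ∪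
          {rel3 𝔽}) := by
  have hset : ((Set.range fun p : Fin 5 × Fin 5 => rel1 𝔽 p.1 p.2) ∪
      (Set.range fun t : Fin 5 × Fin 5 × Fin 5 => rel2 𝔽 t.1 t.2.1 t.2.2) ∪
      {rel3 𝔽}) = RE510.relSet 𝔽 := rfl
  rw [hset]
  apply le_antisymm
  · intro f hf
    rw [LinearMap.mem_ker] at hf
    obtain ⟨q, hq⟩ := RE510.lemG 𝔽 (fun k => f (Sum.inr k)) (RE510.ker_S2 𝔽 f hf)
    rw [RE510.f_decomp 𝔽 f]
    refine Submodule.add_mem _ ?_ ?_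
    · have hsingle : ∀ i j : Fin 5, Finsupp.single (Sum.inl (i, j)) (f (Sum.inl (i, j)))
          = (C ((2:𝔽)⁻¹) * f (Sum.inl (i, j))) • rel1 𝔽 i j
            + (C ((2:𝔽)⁻¹) * f (Sum.inl (i, j))) • RE510.wE 𝔽 i j := by
        intro i j
        have hh : ∀ x : PD 𝔽,
            (Finsupp.single (Sum.inl (i, j) : (Fin 5 × Fin 5) ⊕ Fin 5) x
                + Finsupp.single (Sum.inl (j, i)) x)
              + (Finsupp.single (Sum.inl (i, j)) x - Finsupp.single (Sum.inl (j, i)) x)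
            = Finsupp.single (Sum.inl (i, j)) (x + x) := by
          intro x
          rw [Finsupp.single_add]
          abel
        rw [rel1, RE510.wE, RE510.eA, RE510.eA, smul_add, smul_sub]
        simp only [Finsupp.smul_single, smul_eq_mul, mul_one]
        rw [hh]
        congr 1
        rw [← add_mul, ← C_add]
        have h1 : (2:𝔽)⁻¹ + (2:𝔽)⁻¹ = 1 := by norm_num
        rw [h1, C_1, one_mul]
      have hsplit : (∑ i : Fin 5, ∑ j : Fin 5,
            Finsupp.single (Sum.inl (i, j)) (f (Sum.inl (i, j))))
          = (∑ i : Fin 5, ∑ j : Fin 5, (C ((2:𝔽)⁻¹) * f (Sum.inl (i, j))) • rel1 𝔽 i j)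
            + ∑ i : Fin 5, ∑ j : Fin 5,
                (C ((2:𝔽)⁻¹) * f (Sum.inl (i, j))) • RE510.wE 𝔽 i j := by
        simp only [hsingle, Finset.sum_add_distrib]
      rw [hsplit]
      refine Submodule.add_mem _ ?_ ?_
      · exact Submodule.sum_mem _ fun i _ => Submodule.sum_mem _ fun j _ =>
          Submodule.smul_mem _ _ (Submodule.subset_span (RE510.rel1_mem 𝔽 i j))
      · have hterm : ∀ i j : Fin 5, (C ((2:𝔽)⁻¹) * f (Sum.inl (i, j))) • RE510.wE 𝔽 i j
            = (C ((2:𝔽)⁻¹) * (C ((2:𝔽)⁻¹) * f (Sum.inl (i, j))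
                - C ((2:𝔽)⁻¹) * f (Sum.inl (j, i)))) • RE510.wE 𝔽 i j
              + (C ((2:𝔽)⁻¹) * (C ((2:𝔽)⁻¹) * f (Sum.inl (i, j))
                + C ((2:𝔽)⁻¹) * f (Sum.inl (j, i)))) • RE510.wE 𝔽 i j := by
          intro i j
          rw [← add_smul]
          congr 1
          have h2 : (C ((2:𝔽)⁻¹) : PD 𝔽) * 2 = 1 := by
            rw [← map_ofNat (C : 𝔽 →+* PD 𝔽) 2, ← C_mul]
            norm_num
          linear_combination (-(C ((2:𝔽)⁻¹) * f (Sum.inl (i, j)))) * h2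
        simp only [hterm, Finset.sum_add_distrib]
        refine Submodule.add_mem _ ?_ ?_
        · refine RE510.lemW 𝔽
            (fun i j => C ((2:𝔽)⁻¹) * (C ((2:𝔽)⁻¹) * f (Sum.inl (i, j))
              - C ((2:𝔽)⁻¹) * f (Sum.inl (j, i))))
            (fun i j => by ring) (fun m => ?_)
          have e : ∀ i ∈ Finset.univ,
              (C ((2:𝔽)⁻¹) * (C ((2:𝔽)⁻¹) * f (Sum.inl (i, m))
                - C ((2:𝔽)⁻¹) * f (Sum.inl (m, i)))) * X i
                = (C ((2:𝔽)⁻¹) * C ((2:𝔽)⁻¹))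
                    * ((f (Sum.inl (i, m)) - f (Sum.inl (m, i))) * X i) := by
            intro i _
            ring
          rw [Finset.sum_congr rfl e, ← Finset.mul_sum, RE510.ker_S1 𝔽 f hf m, mul_zero]
        · rw [RE510.sum_skew 𝔽
            (fun i j => C ((2:𝔽)⁻¹) * (C ((2:𝔽)⁻¹) * f (Sum.inl (i, j))
              + C ((2:𝔽)⁻¹) * f (Sum.inl (j, i)))) (RE510.wE 𝔽)
            (fun i j => by ring) (RE510.wE_swap 𝔽)]
          exact Submodule.zero_mem _
    · have hb : (∑ k : Fin 5, Finsupp.single (Sum.inr k) (f (Sum.inr k))) = q • rel3 𝔽 := by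
        rw [rel3, Finset.smul_sum]
        refine Finset.sum_congr rfl fun k _ => ?_
        rw [Finsupp.smul_single, smul_eq_mul, ← hq k]
      rw [hb]
      exact Submodule.smul_mem _ _ (Submodule.subset_span (RE510.rel3_mem 𝔽))
  · rw [Submodule.span_le]
    rintro x hx
    rw [SetLike.mem_coe, LinearMap.mem_ker]
    rcases hx with (⟨p, rfl⟩ | ⟨t, rfl⟩) | hx
    · exact RE510.presMap_rel1 𝔽 p.1 p.2
    · exact RE510.presMap_rel2 𝔽 t.1 t.2.1 t.2.2
    · rw [Set.mem_singleton_iff] at hx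
      subst hx
      exact RE510.presMap_rel3 𝔽
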